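/- For any tropical Laurent polynomial P in n variables and any p ∈ ℝⁿ, there exists an open neighborhood U of p such that the function defined by P and the function defined by in_p(P) agree on U. -/

import Mathlib

noncomputable section
open scoped Classical

/-- The inner product `u · x` of an integer vector and a real vector. -/
def dotRZ {n : ℕ} (u : Fin n → ℤ) (x : Fin n → ℝ) : ℝ := ∑ i, (u i : ℝ) * x i

/-- The value at `x` of the tropical Laurent polynomial with coefficient
function `P : ℤⁿ → 𝕋` (𝕋 = ℝ ∪ {-∞}, embedded in `EReal`):
`P(x) = sup_u (P u + u · x)`. -/
def teval {n : ℕ} (P : (Fin n → ℤ) → EReal) (x : Fin n → ℝ) : EReal :=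
  ⨆ u : Fin n → ℤ, P u + ((dotRZ u x : ℝ) : EReal)

/-- The initial form `in_p(P)`: keep exactly the terms attaining `P(p)`. -/
def initForm {n : ℕ} (p : Fin n → ℝ) (P : (Fin n → ℤ) → EReal) :
    (Fin n → ℤ) → EReal :=
  fun u => if P u + ((dotRZ u p : ℝ) : EReal) = teval P p then P u else ⊥

/-- Tropical addition `⊕` of Laurent polynomials: coefficientwise max. -/
def tadd {n : ℕ} (P Q : (Fin n → ℤ) → EReal) : (Fin n → ℤ) → EReal :=
  fun u => max (P u) (Q u)

/-- Tropical multiplication `⊙` of Laurent polynomials: max-plus convolution. -/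
def tmul {n : ℕ} (P Q : (Fin n → ℤ) → EReal) : (Fin n → ℤ) → EReal :=
  fun u => ⨆ (v : Fin n → ℤ) (w : Fin n → ℤ) (_ : v + w = u), P v + Q w

/-- A tropical Laurent polynomial agrees with its initial form
at `p` on some open (Euclidean) neighbourhood of `p`. -/
theorem eval_eq_initForm_near (n : ℕ) (p : Fin n → ℝ) (P : (Fin n → ℤ) → EReal)
    (hfin : {u | P u ≠ ⊥}.Finite) (htop : ∀ u, P u ≠ ⊤) :
    ∃ U : Set (Fin n → ℝ), IsOpen U ∧ p ∈ U ∧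
      ∀ q ∈ U, teval P q = teval (initForm p P) q := by
  classical
  set T := hfin.toFinset with hT
  have hmemT : ∀ u, u ∈ T ↔ P u ≠ ⊥ := fun u => hfin.mem_toFinset
  by_cases hTe : T.Nonempty
  case neg =>
    refine ⟨Set.univ, isOpen_univ, trivial, fun q _ => ?_⟩
    have hP : ∀ u, P u = ⊥ := by
      intro u
      by_contra h
      exact hTe ⟨u, (hmemT u).mpr h⟩
    have hIF : initForm p P = P := by
      funext u
      simp [initForm, hP u]
    rw [hIF]
  case pos =>
  -- sup over the finite support
  have tsup : ∀ (Q : (Fin n → ℤ) → EReal), (∀ u, u ∉ T → Q u = ⊥) →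
      ∀ q, teval Q q = T.sup fun u => Q u + ((dotRZ u q : ℝ) : EReal) := by
    intro Q hQ q
    apply le_antisymm
    · apply iSup_le
      intro u
      by_cases hu : u ∈ T
      · exact Finset.le_sup (f := fun u => Q u + ((dotRZ u q : ℝ) : EReal)) hu
      · simp [hQ u hu]
    · exact Finset.sup_le fun u _ => le_iSup (fun u => Q u + ((dotRZ u q : ℝ) : EReal)) u
  have hPbot : ∀ u, u ∉ T → P u = ⊥ := by
    intro u hu
    by_contra h
    exact hu ((hmemT u).mpr h)
  obtain ⟨a, haT, haM⟩ := Finset.exists_mem_eq_sup T hTe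
    (fun u => P u + ((dotRZ u p : ℝ) : EReal))
  have haval : P a + ((dotRZ a p : ℝ) : EReal) = teval P p := by
    rw [tsup P hPbot p, haM]
  have hcoe : ∀ u ∈ T, ∀ q : Fin n → ℝ,
      P u + ((dotRZ u q : ℝ) : EReal) = (((P u).toReal + dotRZ u q : ℝ) : EReal) := by
    intro u hu q
    rw [EReal.coe_add, EReal.coe_toReal (htop u) ((hmemT u).mp hu)]
  have hcont : ∀ u : Fin n → ℤ, Continuous fun q : Fin n → ℝ => (P u).toReal + dotRZ u q := by
    intro u
    unfold dotRZ
    exact continuous_const.add (continuous_finset_sum _ fun i _ =>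
      continuous_const.mul (continuous_apply i))
  set B := T.filter (fun u => P u + ((dotRZ u p : ℝ) : EReal) ≠ teval P p) with hB
  refine ⟨⋂ u ∈ B, {q | (P u).toReal + dotRZ u q < (P a).toReal + dotRZ a q},
    isOpen_biInter_finset fun u _ => isOpen_lt (hcont u) (hcont a), ?_, ?_⟩
  · -- p is in U
    refine Set.mem_biInter fun u hu => ?_
    have huT : u ∈ T := Finset.mem_of_mem_filter u hu
    have hune : P u + ((dotRZ u p : ℝ) : EReal) ≠ teval P p := (Finset.mem_filter.mp hu).2
    have hle : P u + ((dotRZ u p : ℝ) : EReal) ≤ teval P p :=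
      le_iSup (fun v => P v + ((dotRZ v p : ℝ) : EReal)) u
    have hlt : P u + ((dotRZ u p : ℝ) : EReal) < P a + ((dotRZ a p : ℝ) : EReal) := by
      rw [haval]
      exact lt_of_le_of_ne hle hune
    rw [hcoe u huT p, hcoe a haT p] at hlt
    exact_mod_cast hlt
  · -- on U the evaluations agree
    intro q hq
    apply le_antisymm
    · -- teval P q ≤ teval (initForm p P) q
      rw [tsup P hPbot q]
      apply Finset.sup_le
      intro u huT
      by_cases hc : P u + ((dotRZ u p : ℝ) : EReal) = teval P p
      · have hIF : initForm p P u = P u := by simp [initForm, hc]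
        rw [← hIF]
        exact le_iSup (fun v => initForm p P v + ((dotRZ v q : ℝ) : EReal)) u
      · have huB : u ∈ B := Finset.mem_filter.mpr ⟨huT, hc⟩
        have hqlt : (P u).toReal + dotRZ u q < (P a).toReal + dotRZ a q :=
          Set.mem_iInter₂.mp hq u huB
        have hIFa : initForm p P a = P a := by simp [initForm, haval]
        calc P u + ((dotRZ u q : ℝ) : EReal)
            ≤ P a + ((dotRZ a q : ℝ) : EReal) := by
              rw [hcoe u huT q, hcoe a haT q]
              exact_mod_cast hqlt.le
          _ = initForm p P a + ((dotRZ a q : ℝ) : EReal) := by rw [hIFa]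
          _ ≤ teval (initForm p P) q :=
              le_iSup (fun v => initForm p P v + ((dotRZ v q : ℝ) : EReal)) a
    · -- teval (initForm p P) q ≤ teval P q
      apply iSup_le
      intro u
      have : initForm p P u ≤ P u := by
        unfold initForm
        split
        · exact le_refl _
        · exact bot_le
      refine le_trans ?_ (le_iSup (fun v => P v + ((dotRZ v q : ℝ) : EReal)) u)
      exact add_le_add_left this _


end
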